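/- Let f : ℝⁿ → ℝ be continuously differentiable, let c > 0, T > 0, and let x : [0, T] → ℝⁿ be differentiable with x'(t) = −c ∇f(x(t)) for all t ∈ [0, T]. Then for every t ∈ [0, T], ‖x(t) − x(0)‖ ≤ √(c · t · (f(x(0)) − f(x(t)))). (This is the length bound (3.7a)–(3.7f) established via the Cauchy–Schwarz inequality in the proof of the paper's Corollary on stability of iterates, in the continuously differentiable case.) -/

import Mathlib

open MeasureTheory InnerProductSpace

lemma cs_interval {t : ℝ} (ht : 0 ≤ t) {h : ℝ → ℝ}
    (hch : ContinuousOn h (Set.Icc 0 t)) :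
    (∫ s in (0:ℝ)..t, h s) ^ 2 ≤ t * ∫ s in (0:ℝ)..t, (h s) ^ 2 := by
  rcases eq_or_lt_of_le ht with rfl | htpos
  · simp
  · have huIcc : Set.uIcc (0:ℝ) t = Set.Icc 0 t := Set.uIcc_of_le ht
    have ih : IntervalIntegrable h volume 0 t :=
      (huIcc ▸ hch).intervalIntegrable
    have ih2 : IntervalIntegrable (fun s => (h s) ^ 2) volume 0 t :=
      (huIcc ▸ (hch.pow 2)).intervalIntegrable
    set I := ∫ s in (0:ℝ)..t, h s with hI
    set J := ∫ s in (0:ℝ)..t, (h s) ^ 2 with hJ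
    have key : 0 ≤ ∫ s in (0:ℝ)..t, (h s - I / t) ^ 2 :=
      intervalIntegral.integral_nonneg ht (fun s _ => sq_nonneg _)
    have expand : (∫ s in (0:ℝ)..t, (h s - I / t) ^ 2)
        = J - 2 * (I / t) * I + (I / t) ^ 2 * t := by
      have heq : ∀ s : ℝ, (h s - I / t) ^ 2
          = (h s ^ 2 - 2 * (I / t) * h s) + (I / t) ^ 2 := by intro s; ring
      simp_rw [heq]
      rw [intervalIntegral.integral_add (ih2.sub (ih.const_mul _))
          intervalIntegrable_const,
        intervalIntegral.integral_sub ih2 (ih.const_mul _),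
        intervalIntegral.integral_const_mul, intervalIntegral.integral_const]
      simp [smul_eq_mul]
      ring
    rw [expand] at key
    have h1 : 0 ≤ J - I ^ 2 / t := by
      have : J - 2 * (I / t) * I + (I / t) ^ 2 * t = J - I ^ 2 / t := by
        field_simp; ring
      linarith [this ▸ key]
    have := mul_le_mul_of_nonneg_left h1 (le_of_lt htpos)
    have h2 : I ^ 2 / t * t = I ^ 2 := div_mul_cancel₀ _ (ne_of_gt htpos)
    nlinarith

theorem stmt_16 {n : ℕ} (f : EuclideanSpace ℝ (Fin n) → ℝ) (hf : ContDiff ℝ 1 f)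
    (c T : ℝ) (hc : 0 < c) (hT : 0 < T)
    (x : ℝ → EuclideanSpace ℝ (Fin n))
    (hx : ∀ t ∈ Set.Icc (0 : ℝ) T, HasDerivAt x (-(c • gradient f (x t))) t) :
    ∀ t ∈ Set.Icc (0 : ℝ) T,
      ‖x t - x 0‖ ≤ Real.sqrt (c * t * (f (x 0) - f (x t))) := by
  intro t ht
  obtain ⟨ht0, htT⟩ := ht
  set g : ℝ → EuclideanSpace ℝ (Fin n) := fun s => gradient f (x s) with hgdef
  -- continuity facts
  have hxcont : ContinuousOn x (Set.Icc 0 T) := fun s hs =>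
    ((hx s hs).continuousAt).continuousWithinAt
  have hgradcont : Continuous (gradient f) := by
    have h1 : Continuous (fderiv ℝ f) := (hf.continuous_fderiv one_ne_zero)
    exact ((toDual ℝ (EuclideanSpace ℝ (Fin n))).symm.continuous).comp h1
  have hgcont : ContinuousOn g (Set.Icc 0 T) :=
    hgradcont.comp_continuousOn hxcont
  have hsub : Set.Icc (0:ℝ) t ⊆ Set.Icc 0 T :=
    Set.Icc_subset_Icc le_rfl htT
  have huIcc : Set.uIcc (0:ℝ) t = Set.Icc 0 t := Set.uIcc_of_le ht0
  -- the chain rule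
  have hchain : ∀ s ∈ Set.Icc (0:ℝ) T,
      HasDerivAt (fun u => f (x u)) (-(c * ‖g s‖ ^ 2)) s := by
    intro s hs
    have hfd : HasFDerivAt f (fderiv ℝ f (x s)) (x s) :=
      (hf.differentiable one_ne_zero (x s)).hasFDerivAt
    have h1 := hfd.comp_hasDerivAt s (hx s hs)
    have h2 : fderiv ℝ f (x s) (-(c • g s)) = -(c * ‖g s‖ ^ 2) := by
      have h3 : fderiv ℝ f (x s) = toDual ℝ _ (g s) := by
        simp only [hgdef, gradient, LinearIsometryEquiv.apply_symm_apply]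
      rw [h3, toDual_apply_apply, inner_neg_right, real_inner_smul_right,
        real_inner_self_eq_norm_sq]
    rw [h2] at h1
    exact h1
  -- FTC for f ∘ x
  have hFTC1 : (∫ s in (0:ℝ)..t, -(c * ‖g s‖ ^ 2)) = f (x t) - f (x 0) := by
    apply intervalIntegral.integral_eq_sub_of_hasDerivAt
    · intro s hs
      exact hchain s (hsub (huIcc ▸ hs))
    · apply ContinuousOn.intervalIntegrable
      rw [huIcc]
      exact (continuousOn_const.mul ((hgcont.mono hsub).norm.pow 2)).neg
  -- FTC for x
  have hFTC2 : (∫ s in (0:ℝ)..t, -(c • g s)) = x t - x 0 := by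
    apply intervalIntegral.integral_eq_sub_of_hasDerivAt
    · intro s hs
      exact hx s (hsub (huIcc ▸ hs))
    · apply ContinuousOn.intervalIntegrable
      rw [huIcc]
      exact ((hgcont.mono hsub).const_smul c).neg
  set I := ∫ s in (0:ℝ)..t, ‖g s‖ with hIdef
  set J := ∫ s in (0:ℝ)..t, ‖g s‖ ^ 2 with hJdef
  have hInonneg : 0 ≤ I :=
    intervalIntegral.integral_nonneg ht0 fun s _ => norm_nonneg _
  have hJnonneg : 0 ≤ J :=
    intervalIntegral.integral_nonneg ht0 fun s _ => sq_nonneg _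
  -- f (x 0) - f (x t) = c * J
  have hfx : f (x 0) - f (x t) = c * J := by
    have : (∫ s in (0:ℝ)..t, -(c * ‖g s‖ ^ 2)) = -(c * J) := by
      rw [intervalIntegral.integral_neg, intervalIntegral.integral_const_mul]
    rw [this] at hFTC1
    linarith
  -- norm bound
  have hnorm : ‖x t - x 0‖ ≤ c * I := by
    rw [← hFTC2]
    calc ‖∫ s in (0:ℝ)..t, -(c • g s)‖
        ≤ ∫ s in (0:ℝ)..t, ‖-(c • g s)‖ :=
          intervalIntegral.norm_integral_le_integral_norm ht0
      _ = c * I := by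
          simp_rw [norm_neg, norm_smul, Real.norm_eq_abs,
            abs_of_pos hc]
          rw [hIdef, intervalIntegral.integral_const_mul]
  -- Cauchy–Schwarz
  have hCS : I ^ 2 ≤ t * J :=
    cs_interval ht0 ((hgcont.mono hsub).norm)
  -- conclusion
  have hrhs : c * t * (f (x 0) - f (x t)) = c ^ 2 * (t * J) := by
    rw [hfx]; ring
  rw [hrhs]
  calc ‖x t - x 0‖ ≤ c * I := hnorm
    _ ≤ Real.sqrt (c ^ 2 * (t * J)) := by
        rw [show c ^ 2 * (t * J) = (c * I) ^ 2 + c ^ 2 * (t * J - I ^ 2) by ring]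
        have h1 : 0 ≤ c ^ 2 * (t * J - I ^ 2) := mul_nonneg (sq_nonneg c) (by linarith)
        calc c * I = Real.sqrt ((c * I) ^ 2) := by
              rw [Real.sqrt_sq (by positivity)]
          _ ≤ _ := Real.sqrt_le_sqrt (by linarith)
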